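/- arXiv:1605.00473 — 4 statements merged into one kernel-verified Lean document; each statement's English description precedes it below -/
import Mathlib

section
/- Let G be a Polish group acting continuously and by isometries on a Polish bounded metric space (X,d) having at least two points, and suppose the action is faithful, i.e. the induced homomorphism G → Iso(X) is a topological embedding. Let (g_n) be a sequence of Borel measurable maps g_n : Ω → G and (t_n) a sequence of invertible measure-preserving transformations of Ω. If for every Borel measurable r : Ω → X one has ∫ d(g_n(ω)•r(t_n⁻¹(ω)), r(ω)) dμ(ω) → 0 as n → ∞, then: (i) for every x ∈ X, ∫ d(g_n(ω)•x, x) dμ(ω) → 0; and (ii) for every Borel set A ⊆ Ω, μ(t_n⁻¹(A) Δ A) → 0. -/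
open MeasureTheory Filter Topology

/-- `Ω` is the unit interval equipped with Lebesgue measure. -/
abbrev Ω : Type := Set.Icc (0 : ℝ) 1

/-- If a Polish group `G` acts continuously, isometrically and faithfully on a Polish bounded
metric space `X` with at least two points, and `(gₙ, tₙ)` is a sequence in the measurable wreath
product `G ≀ Ω` converging to the identity in its action on `L⁰(Ω, X)` (i.e. the displacement
integrals of all random variables tend to `0`), then `gₙ → 1` pointwise in measure and `tₙ → 1`
in the weak topology of `Aut(Ω)`. -/
theorem stmt_0
    (G : Type) [Group G] [TopologicalSpace G] [IsTopologicalGroup G] [PolishSpace G]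
    [MeasurableSpace G] [BorelSpace G]
    (X : Type) [MetricSpace X] [PolishSpace X] [BoundedSpace X]
    [MeasurableSpace X] [BorelSpace X]
    [MulAction G X] [ContinuousSMul G X]
    (htwo : ∃ x y : X, x ≠ y)
    (hfaithful : Function.Injective (fun (g : G) => fun (x : X) => g • x) ∧
      Topology.IsInducing (fun (g : G) => fun (x : X) => g • x))
    (g : ℕ → Ω → G) (hg : ∀ n, Measurable (g n))
    (t : ℕ → Ω ≃ᵐ Ω) (ht : ∀ n, MeasurePreserving (t n) volume volume)
    (hconv : ∀ r : Ω → X, Measurable r →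
      Tendsto (fun n => ∫ ω, dist (g n ω • r ((t n).symm ω)) (r ω) ∂volume) atTop (𝓝 0)) :
    (∀ x : X,
      Tendsto (fun n => ∫ ω, dist (g n ω • x) x ∂volume) atTop (𝓝 0)) ∧
    (∀ A : Set Ω, MeasurableSet A →
      Tendsto (fun n => volume (symmDiff (⇑(t n) ⁻¹' A) A)) atTop (𝓝 0)) := by
  -- a uniform bound on distances
  obtain ⟨C, hC⟩ : ∃ C, ∀ a b : X, dist a b ≤ C := by
    obtain ⟨C, hC⟩ := Metric.isBounded_iff.1 (Bornology.IsBounded.all (Set.univ : Set X))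
    exact ⟨C, fun a b => hC (Set.mem_univ a) (Set.mem_univ b)⟩
  -- generic integrability lemma
  have hint : ∀ (r r' : Ω → X), Measurable r → Measurable r' →
      Integrable (fun ω => dist (r ω) (r' ω)) (volume : Measure Ω) := by
    intro r r' hr hr'
    have hm : Measurable fun ω => dist (r ω) (r' ω) := hr.dist hr'
    refine (integrable_const C).mono' hm.aestronglyMeasurable ?_
    filter_upwards with ω
    rw [Real.norm_eq_abs, abs_of_nonneg dist_nonneg]
    exact hC _ _
  have hsmul : ∀ (n : ℕ) (r : Ω → X), Measurable r →
      Measurable (fun ω => g n ω • r ω) := fun n r hr =>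
    (continuous_smul.measurable).comp ((hg n).prodMk hr)
  have part1 : ∀ x : X,
      Tendsto (fun n => ∫ ω, dist (g n ω • x) x ∂volume) atTop (𝓝 0) :=
    fun x => hconv (fun _ => x) measurable_const
  refine ⟨part1, ?_⟩
  intro A hA
  obtain ⟨x, y, hxy⟩ := htwo
  classical
  set r : Ω → X := fun ω => if ω ∈ A then x else y with hr_def
  have hr : Measurable r := Measurable.ite hA measurable_const measurable_const
  have hrA : ∀ ω, ω ∈ A → r ω = x := fun ω h => if_pos h
  have hrA' : ∀ ω, ω ∉ A → r ω = y := fun ω h => if_neg h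
  -- pointwise identity
  have hpt : ∀ n (ω : Ω), dist (r ((t n).symm ω)) (r ω)
      = (symmDiff ((t n).symm ⁻¹' A) A).indicator (fun _ => dist x y) ω := by
    intro n ω
    by_cases h1 : (t n).symm ω ∈ A <;> by_cases h2 : ω ∈ A
    · rw [hrA _ h1, hrA _ h2, Set.indicator_of_notMem, dist_self]
      simp [Set.mem_symmDiff, h1, h2]
    · rw [hrA _ h1, hrA' _ h2, Set.indicator_of_mem, dist_comm]
      simp [Set.mem_symmDiff, h1, h2]
    · rw [hrA' _ h1, hrA _ h2, dist_comm, Set.indicator_of_mem]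
      simp [Set.mem_symmDiff, h1, h2]
    · rw [hrA' _ h1, hrA' _ h2, Set.indicator_of_notMem, dist_self]
      simp [Set.mem_symmDiff, h1, h2]
  -- The integral of the displacement of r bounds the symmDiff measure
  have key : ∀ n, dist x y * (volume (symmDiff ((t n).symm ⁻¹' A) A)).toReal
      ≤ ∫ ω, dist (g n ω • r ((t n).symm ω)) (r ω) ∂volume
        + ∫ ω, dist (g n ω • x) x ∂volume + ∫ ω, dist (g n ω • y) y ∂volume := by
    intro n
    have hS : MeasurableSet (symmDiff ((t n).symm ⁻¹' A) A) :=
      ((t n).symm.measurable hA).symmDiff hA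
    have hrt : Measurable fun ω => r ((t n).symm ω) := hr.comp (t n).symm.measurable
    have e1 : ∫ ω, dist (r ((t n).symm ω)) (r ω) ∂volume
        = dist x y * (volume (symmDiff ((t n).symm ⁻¹' A) A)).toReal := by
      calc ∫ ω, dist (r ((t n).symm ω)) (r ω) ∂volume
          = ∫ ω, (symmDiff ((t n).symm ⁻¹' A) A).indicator (fun _ => dist x y) ω ∂volume := by
            exact integral_congr_ae (Filter.Eventually.of_forall (hpt n))
        _ = (volume (symmDiff ((t n).symm ⁻¹' A) A)).toReal • dist x y :=
            integral_indicator_const _ hS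
        _ = dist x y * (volume (symmDiff ((t n).symm ⁻¹' A) A)).toReal := by
            rw [smul_eq_mul, mul_comm]
    rw [← e1]
    -- pointwise triangle inequality
    have hb : ∀ ω : Ω, dist (r ((t n).symm ω)) (r ω)
        ≤ dist (g n ω • r ((t n).symm ω)) (r ω)
          + (dist (g n ω • x) x + dist (g n ω • y) y) := by
      intro ω
      have h2 : dist (r ((t n).symm ω)) (g n ω • r ((t n).symm ω))
          ≤ dist (g n ω • x) x + dist (g n ω • y) y := by
        by_cases h : (t n).symm ω ∈ A
        · rw [hrA _ h, dist_comm]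
          exact le_add_of_le_of_nonneg le_rfl dist_nonneg
        · rw [hrA' _ h, dist_comm]
          exact le_add_of_nonneg_of_le dist_nonneg le_rfl
      calc dist (r ((t n).symm ω)) (r ω)
          ≤ dist (r ((t n).symm ω)) (g n ω • r ((t n).symm ω))
            + dist (g n ω • r ((t n).symm ω)) (r ω) := dist_triangle _ _ _
        _ ≤ (dist (g n ω • x) x + dist (g n ω • y) y)
            + dist (g n ω • r ((t n).symm ω)) (r ω) := by gcongr
        _ = dist (g n ω • r ((t n).symm ω)) (r ω)
            + (dist (g n ω • x) x + dist (g n ω • y) y) := by ring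
    have i1 : Integrable (fun ω : Ω => dist (g n ω • r ((t n).symm ω)) (r ω)) volume :=
      hint _ _ (hsmul n _ hrt) hr
    have i2 : Integrable (fun ω : Ω => dist (g n ω • x) x) volume :=
      hint _ _ (hsmul n _ measurable_const) measurable_const
    have i3 : Integrable (fun ω : Ω => dist (g n ω • y) y) volume :=
      hint _ _ (hsmul n _ measurable_const) measurable_const
    calc ∫ ω, dist (r ((t n).symm ω)) (r ω) ∂volume
        ≤ ∫ ω, (dist (g n ω • r ((t n).symm ω)) (r ω)
            + (dist (g n ω • x) x + dist (g n ω • y) y)) ∂volume :=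
          integral_mono (hint _ _ hrt hr) (i1.add (i2.add i3)) hb
      _ = ∫ ω, dist (g n ω • r ((t n).symm ω)) (r ω) ∂volume
            + (∫ ω, dist (g n ω • x) x ∂volume + ∫ ω, dist (g n ω • y) y ∂volume) := by
          have i23 : Integrable (fun ω : Ω => dist (g n ω • x) x + dist (g n ω • y) y)
            volume := i2.add i3
          rw [integral_add i1 i23, integral_add i2 i3]
      _ = _ := by ring
  -- so the toReal measures tend to 0
  have hd : 0 < dist x y := dist_pos.2 hxy
  have hto : Tendsto (fun n => (volume (symmDiff ((t n).symm ⁻¹' A) A)).toReal)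
      atTop (𝓝 0) := by
    have hbound : Tendsto (fun n => ∫ ω, dist (g n ω • r ((t n).symm ω)) (r ω) ∂volume
        + ∫ ω, dist (g n ω • x) x ∂volume + ∫ ω, dist (g n ω • y) y ∂volume)
        atTop (𝓝 0) := by
      have := ((hconv r hr).add (part1 x)).add (part1 y)
      simpa using this
    have hsq : Tendsto (fun n => dist x y *
        (volume (symmDiff ((t n).symm ⁻¹' A) A)).toReal) atTop (𝓝 0) := by
      refine squeeze_zero (fun n => ?_) key hbound
      positivity
    have := hsq.const_mul (dist x y)⁻¹
    simp only [mul_zero] at this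
    convert this using 2 with n
    field_simp
  -- convert symmDiff with t.symm to symmDiff with t
  have hmeq : ∀ n, volume (symmDiff (⇑(t n) ⁻¹' A) A)
      = volume (symmDiff ((t n).symm ⁻¹' A) A) := by
    intro n
    have hS : MeasurableSet (symmDiff ((t n).symm ⁻¹' A) A) :=
      ((t n).symm.measurable hA).symmDiff hA
    calc volume (symmDiff (⇑(t n) ⁻¹' A) A)
        = volume (symmDiff A (⇑(t n) ⁻¹' A)) := by rw [symmDiff_comm]
      _ = volume (⇑(t n) ⁻¹' symmDiff ((t n).symm ⁻¹' A) A) := by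
          have hAA : (⇑(t n)) ⁻¹' ((t n).symm ⁻¹' A) = A := by
            ext ω; simp
          rw [Set.preimage_symmDiff, hAA]
      _ = volume (symmDiff ((t n).symm ⁻¹' A) A) :=
          (ht n).measure_preimage hS.nullMeasurableSet
  have hfin : ∀ n, volume (symmDiff ((t n).symm ⁻¹' A) A) ≠ ⊤ := fun n =>
    measure_ne_top _ _
  have : Tendsto (fun n => volume (symmDiff ((t n).symm ⁻¹' A) A)) atTop (𝓝 0) := by
    rw [← ENNReal.tendsto_toReal_iff hfin ENNReal.zero_ne_top] at *
    simpa using hto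
  simpa only [hmeq] using this
end

section
/- Let G be a group acting by isometries on a Polish metric space (X,d). Then there exists a Borel measurable map σ : X → X such that for every x ∈ X, σ(x) belongs to the closure of the orbit G•x, and such that σ(x) = σ(y) whenever the closures of the orbits G•x and G•y coincide. (Equivalently: the quotient map from X onto the space of orbit closures admits a Borel selector.) -/
open MeasureTheory Metric MulAction Filter Topology

namespace StmtAux

variable {X : Type} [MetricSpace X]

theorem exists_sel0 (u : ℕ → X) (hu : ∀ (x : X) {ε : ℝ}, 0 < ε → ∃ n, dist x (u n) < ε)
    (S : Set X) (hS : S.Nonempty) :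
    ∃ n, infDist (u n) S < 1 := by
  obtain ⟨s, hs⟩ := hS
  obtain ⟨n, hn⟩ := hu s one_pos
  exact ⟨n, lt_of_le_of_lt (infDist_le_dist_of_mem hs) (by rwa [dist_comm])⟩

theorem exists_selStep (u : ℕ → X) (hu : ∀ (x : X) {ε : ℝ}, 0 < ε → ∃ n, dist x (u n) < ε)
    (S : Set X) (hS : S.Nonempty) (m k : ℕ) :
    ∃ n, infDist (u n) S < (1/2) ^ (k+1) ∧
      (infDist (u m) S < (1/2) ^ k → dist (u n) (u m) < (1/2) ^ k + (1/2) ^ (k+1)) := by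
  have hpos : (0:ℝ) < (1/2) ^ (k+1) := by positivity
  by_cases h : infDist (u m) S < (1/2) ^ k
  · obtain ⟨s, hsS, hds⟩ := (infDist_lt_iff hS).1 h
    obtain ⟨n, hn⟩ := hu s hpos
    refine ⟨n, lt_of_le_of_lt (infDist_le_dist_of_mem hsS) (by rwa [dist_comm]), fun _ => ?_⟩
    calc dist (u n) (u m) ≤ dist (u n) s + dist s (u m) := dist_triangle _ _ _
      _ < (1/2) ^ (k+1) + (1/2) ^ k := by
          rw [dist_comm (u n) s, dist_comm s (u m)]; exact add_lt_add hn hds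
      _ = (1/2) ^ k + (1/2) ^ (k+1) := add_comm _ _
  · obtain ⟨s, hs⟩ := hS
    obtain ⟨n, hn⟩ := hu s hpos
    exact ⟨n, lt_of_le_of_lt (infDist_le_dist_of_mem hs) (by rwa [dist_comm]),
      fun hc => absurd hc h⟩

open Classical in
noncomputable def selN (u : ℕ → X) (hu : ∀ (x : X) {ε : ℝ}, 0 < ε → ∃ n, dist x (u n) < ε)
    (S : Set X) (hS : S.Nonempty) : ℕ → ℕ
  | 0 => Nat.find (exists_sel0 u hu S hS)
  | k+1 => Nat.find (exists_selStep u hu S hS (selN u hu S hS k) k)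

theorem selN_infDist (u : ℕ → X) (hu : ∀ (x : X) {ε : ℝ}, 0 < ε → ∃ n, dist x (u n) < ε)
    (S : Set X) (hS : S.Nonempty) : ∀ k, infDist (u (selN u hu S hS k)) S < (1/2) ^ k := by
  classical
  intro k
  induction k with
  | zero => simpa [selN] using Nat.find_spec (exists_sel0 u hu S hS)
  | succ k _ =>
      simpa [selN] using (Nat.find_spec (exists_selStep u hu S hS (selN u hu S hS k) k)).1

theorem selN_dist (u : ℕ → X) (hu : ∀ (x : X) {ε : ℝ}, 0 < ε → ∃ n, dist x (u n) < ε)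
    (S : Set X) (hS : S.Nonempty) (k : ℕ) :
    dist (u (selN u hu S hS (k+1))) (u (selN u hu S hS k)) < (1/2) ^ k + (1/2) ^ (k+1) := by
  classical
  have h := (Nat.find_spec (exists_selStep u hu S hS (selN u hu S hS k) k)).2
    (selN_infDist u hu S hS k)
  simpa [selN] using h

theorem selN_cauchy (u : ℕ → X) (hu : ∀ (x : X) {ε : ℝ}, 0 < ε → ∃ n, dist x (u n) < ε)
    (S : Set X) (hS : S.Nonempty) : CauchySeq (fun k => u (selN u hu S hS k)) := by
  apply cauchySeq_of_le_geometric_two (C := 4)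
  intro n
  have h := selN_dist u hu S hS n
  rw [dist_comm] at h
  have h2 : ((1:ℝ)/2) ^ n = 1 / 2 ^ n := one_div_pow 2 n
  have h3 : ((1:ℝ)/2) ^ (n+1) ≤ (1/2) ^ n :=
    pow_le_pow_of_le_one (by norm_num) (by norm_num) (Nat.le_succ n)
  have : (4:ℝ) / 2 / 2 ^ n = 2 * (1/2) ^ n := by
    rw [h2]; ring
  rw [this]
  linarith

noncomputable def selPt [CompleteSpace X] (u : ℕ → X)
    (hu : ∀ (x : X) {ε : ℝ}, 0 < ε → ∃ n, dist x (u n) < ε)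
    (S : Set X) (hS : S.Nonempty) : X :=
  haveI : Nonempty X := ⟨hS.some⟩
  limUnder atTop (fun k => u (selN u hu S hS k))

theorem tendsto_selPt [CompleteSpace X] (u : ℕ → X)
    (hu : ∀ (x : X) {ε : ℝ}, 0 < ε → ∃ n, dist x (u n) < ε)
    (S : Set X) (hS : S.Nonempty) :
    Tendsto (fun k => u (selN u hu S hS k)) atTop (𝓝 (selPt u hu S hS)) :=
  (selN_cauchy u hu S hS).tendsto_limUnder

theorem selPt_mem [CompleteSpace X] (u : ℕ → X)
    (hu : ∀ (x : X) {ε : ℝ}, 0 < ε → ∃ n, dist x (u n) < ε)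
    (S : Set X) (hS : S.Nonempty) (hSc : IsClosed S) : selPt u hu S hS ∈ S := by
  have h1 : Tendsto (fun k => infDist (u (selN u hu S hS k)) S) atTop
      (𝓝 (infDist (selPt u hu S hS) S)) :=
    ((continuous_infDist_pt S).tendsto _).comp (tendsto_selPt u hu S hS)
  have h2 : Tendsto (fun k => infDist (u (selN u hu S hS k)) S) atTop (𝓝 (0:ℝ)) := by
    apply tendsto_of_tendsto_of_tendsto_of_le_of_le tendsto_const_nhds
      (tendsto_pow_atTop_nhds_zero_of_lt_one (by norm_num) (by norm_num) :
        Tendsto (fun k : ℕ => ((1:ℝ)/2) ^ k) atTop (𝓝 0))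
      (fun k => infDist_nonneg) (fun k => (selN_infDist u hu S hS k).le)
  have h0 : infDist (selPt u hu S hS) S = 0 := tendsto_nhds_unique h1 h2
  exact (hSc.mem_iff_infDist_zero hS).2 h0

theorem selPt_congr [CompleteSpace X] (u : ℕ → X)
    (hu : ∀ (x : X) {ε : ℝ}, 0 < ε → ∃ n, dist x (u n) < ε)
    {S T : Set X} (hS : S.Nonempty) (hT : T.Nonempty) (h : S = T) :
    selPt u hu S hS = selPt u hu T hT := by
  subst h; rfl

theorem measurable_find' {α : Type*} [MeasurableSpace α] {p : α → ℕ → Prop}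
    {D : ∀ x, DecidablePred (p x)} (hp : ∀ x, ∃ n, p x n)
    (hm : ∀ n, MeasurableSet {x | p x n}) :
    Measurable fun x => @Nat.find _ (D x) (hp x) := by
  have h : ∀ n : ℕ, MeasurableSet {x | @Nat.find _ (D x) (hp x) = n} := by
    intro n
    have he : {x | @Nat.find _ (D x) (hp x) = n} =
        {x | p x n} ∩ ⋂ (m : ℕ) (_ : m < n), {x | p x m}ᶜ := by
      ext x
      simp only [Set.mem_setOf_eq, Set.mem_inter_iff, Set.mem_iInter, Set.mem_compl_iff,
        Nat.find_eq_iff]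
    rw [he]
    exact (hm n).inter (MeasurableSet.iInter fun m =>
      MeasurableSet.iInter fun _ => (hm m).compl)
  exact measurable_to_nat fun y => h _

end StmtAux

open StmtAux

theorem aux_sel
    (G : Type) [Group G]
    (X : Type) [MetricSpace X] [CompleteSpace X] [TopologicalSpace.SeparableSpace X]
    [MeasurableSpace X] [BorelSpace X]
    [MulAction G X] (hcont : ∀ g : G, Continuous (fun x : X => g • x)) :
    ∃ σ : X → X, Measurable σ ∧
      (∀ x : X, σ x ∈ closure (MulAction.orbit G x)) ∧
      (∀ x y : X, closure (MulAction.orbit G x) = closure (MulAction.orbit G y) →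
        σ x = σ y) := by
  classical
  rcases isEmpty_or_nonempty X with hX | hX
  · exact ⟨id, measurable_id, fun x => (hX.false x).elim, fun x y _ => (hX.false x).elim⟩
  obtain ⟨u, hu⟩ := TopologicalSpace.exists_dense_seq X
  have hu' : ∀ (x : X) {ε : ℝ}, 0 < ε → ∃ n, dist x (u n) < ε := fun x _ hε =>
    hu.exists_dist_lt x hε
  have hne : ∀ x : X, (closure (MulAction.orbit G x)).Nonempty := fun x =>
    ⟨x, subset_closure (MulAction.mem_orbit_self x)⟩
  -- the key measurability fact
  have key : ∀ (n : ℕ) (c : ℝ),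
      MeasurableSet {x : X | infDist (u n) (closure (MulAction.orbit G x)) < c} := by
    intro n c
    have hset : {x : X | infDist (u n) (closure (MulAction.orbit G x)) < c}
        = ⋃ g : G, {x : X | dist (u n) (g • x) < c} := by
      ext x
      simp only [Set.mem_setOf_eq, Set.mem_iUnion, infDist_closure]
      rw [infDist_lt_iff (⟨x, MulAction.mem_orbit_self x⟩ : (MulAction.orbit G x).Nonempty)]
      constructor
      · rintro ⟨y, ⟨g, rfl⟩, h⟩; exact ⟨g, h⟩
      · rintro ⟨g, h⟩; exact ⟨g • x, ⟨g, rfl⟩, h⟩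
    rw [hset]
    have hopen : IsOpen (⋃ g : G, {x : X | dist (u n) (g • x) < c}) :=
      isOpen_iUnion fun g =>
        isOpen_lt (continuous_const.dist (hcont g)) continuous_const
    exact hopen.measurableSet
  -- measurability of the approximating index functions
  have hNmeas : ∀ k : ℕ,
      Measurable fun x : X => selN u hu' (closure (MulAction.orbit G x)) (hne x) k := by
    intro k
    induction k with
    | zero =>
        simp only [selN]
        exact measurable_find' (fun x => exists_sel0 u hu' _ (hne x)) (fun n => key n 1)
    | succ k ih =>
        simp only [selN]
        apply measurable_find'
          (fun x => exists_selStep u hu' _ (hne x)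
            (selN u hu' (closure (MulAction.orbit G x)) (hne x) k) k)
        intro n
        have hA : MeasurableSet {x : X |
            infDist (u n) (closure (MulAction.orbit G x)) < (1/2) ^ (k+1)} := key n _
        have hB : MeasurableSet {x : X |
            infDist (u (selN u hu' (closure (MulAction.orbit G x)) (hne x) k))
              (closure (MulAction.orbit G x)) < (1/2) ^ k →
            dist (u n) (u (selN u hu' (closure (MulAction.orbit G x)) (hne x) k))
              < (1/2) ^ k + (1/2) ^ (k+1)} := by
          have hrep : {x : X |
              infDist (u (selN u hu' (closure (MulAction.orbit G x)) (hne x) k))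
                (closure (MulAction.orbit G x)) < (1/2) ^ k →
              dist (u n) (u (selN u hu' (closure (MulAction.orbit G x)) (hne x) k))
                < (1/2) ^ k + (1/2) ^ (k+1)} =
              ⋃ m : ℕ,
                ((fun x : X => selN u hu' (closure (MulAction.orbit G x)) (hne x) k) ⁻¹' {m}) ∩
                {x : X | infDist (u m) (closure (MulAction.orbit G x)) < (1/2) ^ k →
                  dist (u n) (u m) < (1/2) ^ k + (1/2) ^ (k+1)} := by
            ext x
            simp only [Set.mem_setOf_eq, Set.mem_iUnion, Set.mem_inter_iff, Set.mem_preimage,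
              Set.mem_singleton_iff]
            constructor
            · intro h
              exact ⟨selN u hu' (closure (MulAction.orbit G x)) (hne x) k, rfl, h⟩
            · rintro ⟨m, hm, h⟩
              rw [hm]; exact h
          rw [hrep]
          refine MeasurableSet.iUnion fun m => MeasurableSet.inter
            (ih (measurableSet_singleton m)) ?_
          by_cases hd : dist (u n) (u m) < (1/2) ^ k + (1/2) ^ (k+1)
          · simp only [hd]
            convert MeasurableSet.univ using 1
            ext x; simp [hd]
          · have : {x : X | infDist (u m) (closure (MulAction.orbit G x)) < (1/2) ^ k →
                dist (u n) (u m) < (1/2) ^ k + (1/2) ^ (k+1)} =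
                {x : X | infDist (u m) (closure (MulAction.orbit G x)) < (1/2) ^ k}ᶜ := by
              ext x
              simp only [Set.mem_setOf_eq, Set.mem_compl_iff]
              exact ⟨fun h hP => hd (h hP), fun h hP => absurd hP h⟩
            rw [this]
            exact (key m _).compl
        exact hA.inter hB
  refine ⟨fun x => selPt u hu' (closure (MulAction.orbit G x)) (hne x), ?_, ?_, ?_⟩
  · -- measurability
    have hf : ∀ k : ℕ, Measurable fun x : X =>
        u (selN u hu' (closure (MulAction.orbit G x)) (hne x) k) := fun k =>
      measurable_from_nat.comp (hNmeas k)
    have htend : Tendsto (fun (k : ℕ) (x : X) =>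
        u (selN u hu' (closure (MulAction.orbit G x)) (hne x) k)) atTop
        (𝓝 fun x => selPt u hu' (closure (MulAction.orbit G x)) (hne x)) := by
      rw [tendsto_pi_nhds]
      exact fun x => tendsto_selPt u hu' _ (hne x)
    exact measurable_of_tendsto_metrizable hf htend
  · exact fun x => selPt_mem u hu' _ (hne x) isClosed_closure
  · exact fun x y h => selPt_congr u hu' (hne x) (hne y) h


/-- For a group `G` acting by isometries on a Polish metric space `X`, the quotient map onto the
space of orbit closures admits a Borel selector: there is a Borel map `σ : X → X` with
`σ x ∈ closure (G • x)` for all `x`, which is constant on the fibers of the map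
`x ↦ closure (G • x)`. -/
theorem stmt_1
    (G : Type) [Group G]
    (X : Type) [MetricSpace X] [PolishSpace X] [MeasurableSpace X] [BorelSpace X]
    [MulAction G X] (hiso : ∀ g : G, Isometry (fun x : X => g • x)) :
    ∃ σ : X → X, Measurable σ ∧
      (∀ x : X, σ x ∈ closure (MulAction.orbit G x)) ∧
      (∀ x y : X, closure (MulAction.orbit G x) = closure (MulAction.orbit G y) →
        σ x = σ y) := by
  letI upg : TopologicalSpace.UpgradedIsCompletelyMetrizableSpace X :=
    TopologicalSpace.upgradeIsCompletelyMetrizable X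
  have hsep : @TopologicalSpace.SeparableSpace X
      upg.toMetricSpace.toUniformSpace.toTopologicalSpace :=
    TopologicalSpace.SecondCountableTopology.to_separableSpace
  have hborel : @BorelSpace X upg.toMetricSpace.toUniformSpace.toTopologicalSpace _ :=
    ⟨BorelSpace.measurable_eq⟩
  have hcont : ∀ g : G,
      @Continuous X X upg.toMetricSpace.toUniformSpace.toTopologicalSpace
        upg.toMetricSpace.toUniformSpace.toTopologicalSpace (fun x : X => g • x) :=
    fun g => (hiso g).continuous
  exact @aux_sel G _ X upg.toMetricSpace upg.toCompleteSpace hsep _ hborel _ hcont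
end

section
/- Let G be a Polish group acting continuously and by isometries on a Polish metric space (X,d) with d bounded. Then for all Borel measurable maps r, s : Ω → X, the infimum over all Borel measurable maps g : Ω → G of ∫ d(r(ω), g(ω)•s(ω)) dμ(ω) equals ∫ inf_{g∈G} d(r(ω), g•s(ω)) dμ(ω). (In particular, the function ω ↦ inf_{g∈G} d(r(ω), g•s(ω)) is measurable.) -/
open MeasureTheory

/-- For a Polish group `G` acting continuously and isometrically on a bounded Polish metric space
`X`, and Borel random variables `r, s : Ω → X`, the distance between the orbits of `r` and `s`
under `L⁰(Ω, G)` equals the integral of the pointwise orbit distances; in particular the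
pointwise orbit distance function is measurable. -/
theorem stmt_3
    (G : Type) [Group G] [TopologicalSpace G] [IsTopologicalGroup G] [PolishSpace G]
    [MeasurableSpace G] [BorelSpace G]
    (X : Type) [MetricSpace X] [PolishSpace X] [BoundedSpace X]
    [MeasurableSpace X] [BorelSpace X]
    [MulAction G X] [ContinuousSMul G X] (hiso : ∀ g : G, Isometry (fun x : X => g • x))
    (r s : Ω → X) (hr : Measurable r) (hs : Measurable s) :
    Measurable (fun ω => ⨅ g : G, dist (r ω) (g • s ω)) ∧
    (⨅ g : {g : Ω → G // Measurable g}, ∫ ω, dist (r ω) ((g : Ω → G) ω • s ω) ∂volume) =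
      ∫ ω, (⨅ g : G, dist (r ω) (g • s ω)) ∂volume := by
  classical
  haveI : Nonempty {g : Ω → G // Measurable g} := ⟨⟨fun _ => 1, measurable_const⟩⟩
  obtain ⟨d, hd⟩ := TopologicalSpace.exists_dense_seq G
  -- a uniform bound on distances
  obtain ⟨C, hC⟩ : ∃ C : ℝ, ∀ x y : X, dist x y ≤ C := by
    obtain ⟨C, hC⟩ := Metric.isBounded_iff.mp (Bornology.IsBounded.all (Set.univ : Set X))
    exact ⟨C, fun x y => hC (Set.mem_univ x) (Set.mem_univ y)⟩
  have bdd : ∀ x y : X, BddBelow (Set.range fun g : G => dist x (g • y)) := by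
    intro x y
    exact ⟨0, by rintro _ ⟨g, rfl⟩; exact dist_nonneg⟩
  have bddn : ∀ x y : X, BddBelow (Set.range fun n : ℕ => dist x (d n • y)) := by
    intro x y
    exact ⟨0, by rintro _ ⟨n, rfl⟩; exact dist_nonneg⟩
  -- the infimum over `G` equals the infimum over a countable dense sequence
  have key : ∀ x y : X, (⨅ g : G, dist x (g • y)) = ⨅ n : ℕ, dist x (d n • y) := by
    intro x y
    apply le_antisymm
    · exact le_ciInf fun n => ciInf_le (bdd x y) (d n)
    · refine le_ciInf fun g => ?_
      refine le_of_forall_pos_le_add fun ε hε => ?_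
      have hcont : Continuous fun h : G => dist x (h • y) :=
        continuous_const.dist ((continuous_id.smul continuous_const))
      have hU : IsOpen ((fun h : G => dist x (h • y)) ⁻¹' Set.Iio (dist x (g • y) + ε)) :=
        hcont.isOpen_preimage _ isOpen_Iio
      have hgU : g ∈ (fun h : G => dist x (h • y)) ⁻¹' Set.Iio (dist x (g • y) + ε) := by
        simp [hε]
      obtain ⟨n, hn⟩ := hd.exists_mem_open hU ⟨g, hgU⟩
      exact ciInf_le_of_le (bddn x y) n (le_of_lt hn)
  have smeas : ∀ n : ℕ, Measurable fun ω : Ω => dist (r ω) (d n • s ω) :=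
    fun n => hr.dist (hs.const_smul (d n))
  have meas : Measurable fun ω : Ω => ⨅ g : G, dist (r ω) (g • s ω) := by
    simp only [key]
    exact Measurable.iInf smeas
  refine ⟨meas, ?_⟩
  have hinf_nonneg : ∀ ω : Ω, 0 ≤ ⨅ g : G, dist (r ω) (g • s ω) := by
    intro ω
    exact le_ciInf fun g => dist_nonneg
  have hinf_le : ∀ (ω : Ω) (g : G), (⨅ g' : G, dist (r ω) (g' • s ω)) ≤ dist (r ω) (g • s ω) :=
    fun ω g => ciInf_le (bdd (r ω) (s ω)) g
  -- integrability of the pointwise infimum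
  have hint_inf : Integrable (fun ω : Ω => ⨅ g : G, dist (r ω) (g • s ω)) volume := by
    refine ⟨meas.aestronglyMeasurable, ?_⟩
    apply HasFiniteIntegral.of_bounded (C := C)
    filter_upwards with ω
    rw [Real.norm_eq_abs, abs_of_nonneg (hinf_nonneg ω)]
    exact le_trans (hinf_le ω 1) (hC _ _)
  have hint_dist : ∀ g : {g : Ω → G // Measurable g},
      Integrable (fun ω : Ω => dist (r ω) ((g : Ω → G) ω • s ω)) volume := by
    intro g
    refine ⟨(hr.dist (g.2.smul hs)).aestronglyMeasurable, ?_⟩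
    apply HasFiniteIntegral.of_bounded (C := C)
    filter_upwards with ω
    rw [Real.norm_eq_abs, abs_of_nonneg dist_nonneg]
    exact hC _ _
  apply le_antisymm
  · -- approximation: for each ε > 0 choose a measurable selection
    refine le_of_forall_pos_le_add fun ε hε => ?_
    have hex : ∀ ω : Ω, ∃ n : ℕ,
        dist (r ω) (d n • s ω) < (⨅ g : G, dist (r ω) (g • s ω)) + ε := by
      intro ω
      have : (⨅ n : ℕ, dist (r ω) (d n • s ω)) < (⨅ g : G, dist (r ω) (g • s ω)) + ε := by
        rw [← key]; linarith [hinf_nonneg ω]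
      exact exists_lt_of_ciInf_lt this
    set N : Ω → ℕ := fun ω => Nat.find (hex ω) with hN
    have hNmeas : Measurable N := by
      apply measurable_find hex
      intro n
      have : MeasurableSet {ω : Ω | dist (r ω) (d n • s ω)
          < (⨅ g : G, dist (r ω) (g • s ω)) + ε} :=
        measurableSet_lt (smeas n) (meas.add measurable_const)
      exact this
    have hgmeas : Measurable fun ω => d (N ω) := (measurable_from_top (f := d)).comp hNmeas
    have hbound : ∀ ω : Ω, dist (r ω) (d (N ω) • s ω)
        ≤ (⨅ g : G, dist (r ω) (g • s ω)) + ε := fun ω => le_of_lt (Nat.find_spec (hex ω))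
    refine le_trans (ciInf_le (f := fun g : {g : Ω → G // Measurable g} =>
        ∫ ω, dist (r ω) ((g : Ω → G) ω • s ω) ∂volume)
        ⟨0, by rintro _ ⟨g, rfl⟩; exact integral_nonneg fun ω => dist_nonneg⟩
        ⟨fun ω => d (N ω), hgmeas⟩) ?_
    calc ∫ ω, dist (r ω) (d (N ω) • s ω) ∂volume
        ≤ ∫ ω, ((⨅ g : G, dist (r ω) (g • s ω)) + ε) ∂volume := by
          apply integral_mono (hint_dist ⟨fun ω => d (N ω), hgmeas⟩)
            (hint_inf.add (integrable_const ε)) hbound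
      _ = (∫ ω, (⨅ g : G, dist (r ω) (g • s ω)) ∂volume) + ε := by
          rw [integral_add hint_inf (integrable_const ε), integral_const]
          simp
  · refine le_ciInf fun g => ?_
    exact integral_mono hint_inf (hint_dist g) fun ω => hinf_le ω ((g : Ω → G) ω)
end

section
/- Let S be a compact metrizable space, let H be a separable complex Hilbert space, and let β : S → B(H) be a map into the bounded operators on H such that ‖β(x)‖ ≤ 1 for all x ∈ S and such that β is continuous from S to B(H) with the weak operator topology. Let λ be a Borel probability measure on [0,1] × S × [0,1] whose marginals on the first and third coordinates both equal Lebesgue measure. Then there exists a unique bounded linear operator B_λ on the Bochner space L²([0,1], H) satisfying ⟨f₀, B_λ f₁⟩ = ∫ ⟨f₀(ω₀), β(x) f₁(ω₁)⟩ dλ(ω₀, x, ω₁) for all f₀, f₁ ∈ L²([0,1], H), and this operator satisfies ‖B_λ‖ ≤ 1. Moreover, the map λ ↦ B_λ is continuous from the weak convergence topology on such measures to the weak operator topology. -/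
open MeasureTheory

open ComplexConjugate Filter

section Aux
variable {S : Type} [TopologicalSpace S]
  {H : Type} [NormedAddCommGroup H] [InnerProductSpace ℂ H]
  {β : S → H →L[ℂ] H}

lemma innerB_bound (hcontr : ∀ x : S, ‖β x‖ ≤ 1) (u v : H) (x : S) :
    ‖(inner ℂ u ((β x) v) : ℂ)‖ ≤ ‖u‖ * ‖v‖ := by
  refine (norm_inner_le_norm _ _).trans ?_
  have h1 := (β x).le_opNorm v
  have h2 := hcontr x
  nlinarith [norm_nonneg u, norm_nonneg v, norm_nonneg ((β x) v), norm_nonneg (β x),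
    mul_le_mul_of_nonneg_left h1 (norm_nonneg u),
    mul_le_mul_of_nonneg_right h2 (mul_nonneg (norm_nonneg u) (norm_nonneg v))]

lemma contF (hcontr : ∀ x : S, ‖β x‖ ≤ 1)
    (hwot : ∀ u v : H, Continuous fun x : S => (inner ℂ u ((β x) v) : ℂ)) :
    Continuous fun q : H × S × H => (inner ℂ q.1 ((β q.2.1) q.2.2) : ℂ) := by
  rw [continuous_iff_continuousAt]
  rintro ⟨u₀, x₀, v₀⟩
  have hG : ContinuousAt (fun q : H × S × H => (inner ℂ u₀ ((β q.2.1) v₀) : ℂ)) (u₀, x₀, v₀) :=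
    ((hwot u₀ v₀).comp (continuous_fst.comp continuous_snd)).continuousAt
  have hb : ∀ q : H × S × H,
      ‖(inner ℂ q.1 ((β q.2.1) q.2.2) : ℂ) - inner ℂ u₀ ((β q.2.1) v₀)‖
        ≤ ‖q.1 - u₀‖ * ‖q.2.2‖ + ‖u₀‖ * ‖q.2.2 - v₀‖ := by
    intro q
    have hsplit : (inner ℂ q.1 ((β q.2.1) q.2.2) : ℂ) - inner ℂ u₀ ((β q.2.1) v₀)
        = inner ℂ (q.1 - u₀) ((β q.2.1) q.2.2) + inner ℂ u₀ ((β q.2.1) (q.2.2 - v₀)) := by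
      simp [inner_sub_left, inner_sub_right, map_sub]
    rw [hsplit]
    exact (norm_add_le _ _).trans
      (add_le_add (innerB_bound hcontr _ _ _) (innerB_bound hcontr _ _ _))
  have htend : Tendsto (fun q : H × S × H => ‖q.1 - u₀‖ * ‖q.2.2‖ + ‖u₀‖ * ‖q.2.2 - v₀‖)
      (nhds (u₀, x₀, v₀)) (nhds 0) := by
    have hc : Continuous fun q : H × S × H =>
        ‖q.1 - u₀‖ * ‖q.2.2‖ + ‖u₀‖ * ‖q.2.2 - v₀‖ := by fun_prop
    have := hc.continuousAt (x := (u₀, x₀, v₀))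
    simpa [ContinuousAt] using this
  have hdiff := squeeze_zero_norm hb htend
  have := hdiff.add hG
  simpa [ContinuousAt] using this
end Aux


set_option linter.unusedSectionVars false
section Meas
variable {S : Type} [TopologicalSpace S] [CompactSpace S] [TopologicalSpace.MetrizableSpace S]
  [MeasurableSpace S] [BorelSpace S]
  {H : Type} [NormedAddCommGroup H] [InnerProductSpace ℂ H] [CompleteSpace H]
  [SecondCountableTopology H]
  {β : S → H →L[ℂ] H}
  {m : Measure (Ω × S × Ω)} [IsProbabilityMeasure m]

example : SecondCountableTopology S := by infer_instance

lemma meas_trd : Measurable fun q : Ω × S × Ω => q.2.2 := measurable_snd.comp measurable_snd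

-- a.e. transfer along first coordinate
lemma ae_fst (h1 : Measure.map Prod.fst m = volume) {p : Ω → Prop}
    (h : ∀ᵐ ω ∂(volume : Measure Ω), p ω) : ∀ᵐ q ∂m, p q.1 :=
  ae_of_ae_map measurable_fst.aemeasurable (h1 ▸ h)

lemma ae_trd (h2 : Measure.map (fun q : Ω × S × Ω => q.2.2) m = volume) {p : Ω → Prop}
    (h : ∀ᵐ ω ∂(volume : Measure Ω), p ω) : ∀ᵐ q ∂m, p q.2.2 :=
  ae_of_ae_map meas_trd.aemeasurable (h2 ▸ h)

lemma aesm_comp_fst (h1 : Measure.map Prod.fst m = volume) (f₀ : Lp H 2 (volume : Measure Ω)) :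
    AEStronglyMeasurable (fun q : Ω × S × Ω => f₀ q.1) m := by
  apply AEStronglyMeasurable.comp_measurable (f := (Prod.fst : Ω × S × Ω → Ω)) _ measurable_fst
  rw [h1]; exact Lp.aestronglyMeasurable f₀

lemma aesm_comp_trd (h2 : Measure.map (fun q : Ω × S × Ω => q.2.2) m = volume)
    (f₁ : Lp H 2 (volume : Measure Ω)) :
    AEStronglyMeasurable (fun q : Ω × S × Ω => f₁ q.2.2) m := by
  apply AEStronglyMeasurable.comp_measurable (f := fun q : Ω × S × Ω => q.2.2) _ meas_trd
  rw [h2]; exact Lp.aestronglyMeasurable f₁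

lemma aesm_integrand (hcontr : ∀ x : S, ‖β x‖ ≤ 1)
    (hwot : ∀ u v : H, Continuous fun x : S => (inner ℂ u ((β x) v) : ℂ))
    (h1 : Measure.map Prod.fst m = volume)
    (h2 : Measure.map (fun q : Ω × S × Ω => q.2.2) m = volume)
    (f₀ f₁ : Lp H 2 (volume : Measure Ω)) :
    AEStronglyMeasurable (fun q : Ω × S × Ω => (inner ℂ (f₀ q.1) ((β q.2.1) (f₁ q.2.2)) : ℂ)) m := by
  have hx : AEStronglyMeasurable (fun q : Ω × S × Ω => q.2.1) m :=
    (measurable_fst.comp measurable_snd).aestronglyMeasurable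
  exact (contF hcontr hwot).comp_aestronglyMeasurable
    ((aesm_comp_fst h1 f₀).prodMk (hx.prodMk (aesm_comp_trd h2 f₁)))

lemma integrable_norm_sq_vol (f : Lp H 2 (volume : Measure Ω)) :
    Integrable (fun ω : Ω => ‖f ω‖ ^ 2) (volume : Measure Ω) := by
  have h := (L2.integrable_inner (𝕜 := ℂ) f f).re
  refine h.congr (Filter.Eventually.of_forall fun ω => ?_)
  exact inner_self_eq_norm_sq (f ω)

lemma integrable_fst_sq (h1 : Measure.map Prod.fst m = volume) (f₀ : Lp H 2 (volume : Measure Ω)) :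
    Integrable (fun q : Ω × S × Ω => ‖f₀ q.1‖ ^ 2) m := by
  have : Integrable ((fun ω : Ω => ‖f₀ ω‖ ^ 2) ∘ (Prod.fst : Ω × S × Ω → Ω)) m := by
    apply Integrable.comp_measurable _ measurable_fst
    rw [h1]; exact integrable_norm_sq_vol f₀
  exact this

lemma integrable_trd_sq (h2 : Measure.map (fun q : Ω × S × Ω => q.2.2) m = volume)
    (f₁ : Lp H 2 (volume : Measure Ω)) :
    Integrable (fun q : Ω × S × Ω => ‖f₁ q.2.2‖ ^ 2) m := by
  have : Integrable ((fun ω : Ω => ‖f₁ ω‖ ^ 2) ∘ (fun q : Ω × S × Ω => q.2.2)) m := by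
    apply Integrable.comp_measurable _ meas_trd
    rw [h2]; exact integrable_norm_sq_vol f₁
  exact this

lemma integrable_integrand (hcontr : ∀ x : S, ‖β x‖ ≤ 1)
    (hwot : ∀ u v : H, Continuous fun x : S => (inner ℂ u ((β x) v) : ℂ))
    (h1 : Measure.map Prod.fst m = volume)
    (h2 : Measure.map (fun q : Ω × S × Ω => q.2.2) m = volume)
    (f₀ f₁ : Lp H 2 (volume : Measure Ω)) :
    Integrable (fun q : Ω × S × Ω => (inner ℂ (f₀ q.1) ((β q.2.1) (f₁ q.2.2)) : ℂ)) m := by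
  refine Integrable.mono' (((integrable_fst_sq h1 f₀).add (integrable_trd_sq h2 f₁)).div_const 2)
    (aesm_integrand hcontr hwot h1 h2 f₀ f₁) (Filter.Eventually.of_forall fun q => ?_)
  simp only [Pi.add_apply]
  have := innerB_bound hcontr (f₀ q.1) (f₁ q.2.2) q.2.1
  nlinarith [norm_nonneg (f₀ q.1), norm_nonneg (f₁ q.2.2), sq_nonneg (‖f₀ q.1‖ - ‖f₁ q.2.2‖)]

lemma int_norm_sq_vol (f : Lp H 2 (volume : Measure Ω)) :
    ∫ ω : Ω, ‖f ω‖ ^ 2 ∂(volume : Measure Ω) = ‖f‖ ^ 2 := by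
  have h1 : (‖f‖ : ℝ) ^ 2 = RCLike.re (inner ℂ f f : ℂ) := (inner_self_eq_norm_sq f).symm
  rw [h1, L2.inner_def, ← integral_re (L2.integrable_inner (𝕜 := ℂ) f f)]
  exact integral_congr_ae (Filter.Eventually.of_forall fun ω => (inner_self_eq_norm_sq (f ω)).symm)

lemma int_fst_sq (h1 : Measure.map Prod.fst m = volume) (f₀ : Lp H 2 (volume : Measure Ω)) :
    ∫ q : Ω × S × Ω, ‖f₀ q.1‖ ^ 2 ∂m = ‖f₀‖ ^ 2 := by
  have h' : AEStronglyMeasurable (fun ω : Ω => ‖f₀ ω‖ ^ 2) (Measure.map Prod.fst m) := by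
    rw [h1]; exact ((Lp.aestronglyMeasurable f₀).norm.pow 2)
  have hmap := integral_map (μ := m) measurable_fst.aemeasurable h'
  rw [h1] at hmap
  rw [← hmap, int_norm_sq_vol]

lemma int_trd_sq (h2 : Measure.map (fun q : Ω × S × Ω => q.2.2) m = volume)
    (f₁ : Lp H 2 (volume : Measure Ω)) :
    ∫ q : Ω × S × Ω, ‖f₁ q.2.2‖ ^ 2 ∂m = ‖f₁‖ ^ 2 := by
  have h' : AEStronglyMeasurable (fun ω : Ω => ‖f₁ ω‖ ^ 2) (Measure.map (fun q : Ω × S × Ω => q.2.2) m) := by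
    rw [h2]; exact ((Lp.aestronglyMeasurable f₁).norm.pow 2)
  have hmap := integral_map (μ := m) meas_trd.aemeasurable h'
  rw [h2] at hmap
  rw [← hmap, int_norm_sq_vol]


noncomputable def Ig (β : S → H →L[ℂ] H) (m : Measure (Ω × S × Ω))
    (f₀ f₁ : Lp H 2 (volume : Measure Ω)) : ℂ :=
  ∫ q : Ω × S × Ω, (inner ℂ (f₀ q.1) ((β q.2.1) (f₁ q.2.2)) : ℂ) ∂m

variable (hcontr : ∀ x : S, ‖β x‖ ≤ 1)
  (hwot : ∀ u v : H, Continuous fun x : S => (inner ℂ u ((β x) v) : ℂ))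
  (h1 : Measure.map Prod.fst m = volume)
  (h2 : Measure.map (fun q : Ω × S × Ω => q.2.2) m = volume)
  (f₀ f₀' f₁ f₁' : Lp H 2 (volume : Measure Ω))

set_option maxHeartbeats 1000000

include hcontr hwot h1 h2 in
lemma Ig_smul_left (c : ℂ) : Ig β m (c • f₀) f₁ = conj c * Ig β m f₀ f₁ := by
  unfold Ig
  rw [← MeasureTheory.integral_const_mul]
  apply integral_congr_ae
  have hv : ∀ᵐ ω ∂(volume : Measure Ω), (c • f₀ : Lp H 2 (volume : Measure Ω)) ω = c • (f₀ ω) :=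
    (Lp.coeFn_smul c f₀).mono fun ω h => h
  filter_upwards [ae_fst h1 hv] with q hq
  rw [hq, inner_smul_left]

include hcontr hwot h1 h2 in
lemma Ig_smul_right (c : ℂ) : Ig β m f₀ (c • f₁) = c * Ig β m f₀ f₁ := by
  unfold Ig
  rw [← MeasureTheory.integral_const_mul]
  apply integral_congr_ae
  have hv : ∀ᵐ ω ∂(volume : Measure Ω), (c • f₁ : Lp H 2 (volume : Measure Ω)) ω = c • (f₁ ω) :=
    (Lp.coeFn_smul c f₁).mono fun ω h => h
  filter_upwards [ae_trd h2 hv] with q hq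
  rw [hq]
  simp [inner_smul_right]

include hcontr hwot h1 h2 in
lemma Ig_add_left : Ig β m (f₀ + f₀') f₁ = Ig β m f₀ f₁ + Ig β m f₀' f₁ := by
  unfold Ig
  rw [← integral_add (integrable_integrand hcontr hwot h1 h2 f₀ f₁)
    (integrable_integrand hcontr hwot h1 h2 f₀' f₁)]
  apply integral_congr_ae
  have hv : ∀ᵐ ω ∂(volume : Measure Ω),
      (f₀ + f₀' : Lp H 2 (volume : Measure Ω)) ω = f₀ ω + f₀' ω :=
    (Lp.coeFn_add f₀ f₀').mono fun ω h => h
  filter_upwards [ae_fst h1 hv] with q hq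
  rw [hq, inner_add_left]

include hcontr hwot h1 h2 in
lemma Ig_add_right : Ig β m f₀ (f₁ + f₁') = Ig β m f₀ f₁ + Ig β m f₀ f₁' := by
  unfold Ig
  rw [← integral_add (integrable_integrand hcontr hwot h1 h2 f₀ f₁)
    (integrable_integrand hcontr hwot h1 h2 f₀ f₁')]
  apply integral_congr_ae
  have hv : ∀ᵐ ω ∂(volume : Measure Ω),
      (f₁ + f₁' : Lp H 2 (volume : Measure Ω)) ω = f₁ ω + f₁' ω :=
    (Lp.coeFn_add f₁ f₁').mono fun ω h => h
  filter_upwards [ae_trd h2 hv] with q hq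
  rw [hq]
  simp [inner_add_right]

include hcontr h1 h2 in
include hcontr hwot h1 h2 in
lemma Ig_bound_half : ‖Ig β m f₀ f₁‖ ≤ (‖f₀‖ ^ 2 + ‖f₁‖ ^ 2) / 2 := by
  have hb : ‖Ig β m f₀ f₁‖ ≤ ∫ q : Ω × S × Ω, (‖f₀ q.1‖ ^ 2 + ‖f₁ q.2.2‖ ^ 2) / 2 ∂m := by
    apply norm_integral_le_of_norm_le
    · exact ((integrable_fst_sq h1 f₀).add (integrable_trd_sq h2 f₁)).div_const 2
    · refine Filter.Eventually.of_forall fun q => ?_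
      have := innerB_bound hcontr (f₀ q.1) (f₁ q.2.2) q.2.1
      nlinarith [norm_nonneg (f₀ q.1), norm_nonneg (f₁ q.2.2),
        sq_nonneg (‖f₀ q.1‖ - ‖f₁ q.2.2‖)]
  rw [integral_div, integral_add (integrable_fst_sq h1 f₀) (integrable_trd_sq h2 f₁),
    int_fst_sq h1 f₀, int_trd_sq h2 f₁] at hb
  exact hb

include hcontr hwot h1 h2 in
lemma Ig_bound : ‖Ig β m f₀ f₁‖ ≤ ‖f₀‖ * ‖f₁‖ := by
  rcases eq_or_ne f₀ 0 with hf₀ | hf₀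
  · have hz : Ig β m 0 f₁ = 0 := by
      have h := Ig_smul_left (β := β) hcontr hwot h1 h2 0 f₁ 0
      simpa using h
    rw [hf₀]
    simp [hz]
  rcases eq_or_ne f₁ 0 with hf₁ | hf₁
  · have hz : Ig β m f₀ 0 = 0 := by
      have h := Ig_smul_right (β := β) hcontr hwot h1 h2 f₀ 0 0
      simpa using h
    rw [hf₁]
    simp [hz]
  set a := ‖f₀‖ with ha_def
  set b := ‖f₁‖ with hb_def
  have ha : 0 < a := norm_pos_iff.mpr hf₀
  have hb : 0 < b := norm_pos_iff.mpr hf₁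
  set t := Real.sqrt (b / a) with ht_def
  have htpos : 0 < t := Real.sqrt_pos.mpr (div_pos hb ha)
  have ht2 : t ^ 2 = b / a := Real.sq_sqrt (div_pos hb ha).le
  have htne : ((t : ℂ)) ≠ 0 := by
    simpa using Complex.ofReal_ne_zero.mpr htpos.ne'
  have key : Ig β m (((t : ℂ)) • f₀) (((t : ℂ))⁻¹ • f₁) = Ig β m f₀ f₁ := by
    rw [Ig_smul_left hcontr hwot h1 h2, Ig_smul_right hcontr hwot h1 h2, Complex.conj_ofReal]
    field_simp
  have hh := Ig_bound_half hcontr hwot h1 h2 (((t : ℂ)) • f₀) (((t : ℂ))⁻¹ • f₁)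
  rw [key] at hh
  have hn0 : ‖((t : ℂ)) • f₀‖ = t * a := by
    rw [norm_smul, Complex.norm_real, Real.norm_eq_abs, abs_of_pos htpos]
  have hn1 : ‖((t : ℂ))⁻¹ • f₁‖ = t⁻¹ * b := by
    rw [norm_smul, norm_inv, Complex.norm_real, Real.norm_eq_abs, abs_of_pos htpos]
  rw [hn0, hn1] at hh
  have e1 : (t * a) ^ 2 = a * b := by
    rw [mul_pow, ht2]; field_simp
  have e2 : (t⁻¹ * b) ^ 2 = a * b := by
    rw [mul_pow, inv_pow, ht2]; field_simp
  rw [e1, e2] at hh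
  linarith

include hcontr hwot h1 h2 in
lemma exists_op :
    ∃ B : Lp H 2 (volume : Measure Ω) →L[ℂ] Lp H 2 (volume : Measure Ω),
      (∀ u v : Lp H 2 (volume : Measure Ω), (inner ℂ u (B v) : ℂ) = Ig β m u v) ∧ ‖B‖ ≤ 1 := by
  classical
  let ℓ : Lp H 2 (volume : Measure Ω) → (Lp H 2 (volume : Measure Ω) →L[ℂ] ℂ) := fun g =>
    LinearMap.mkContinuous
      { toFun := fun f => conj (Ig β m f g)
        map_add' := fun f f' => by
          simp only [Ig_add_left hcontr hwot h1 h2 f f' g, map_add]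
        map_smul' := fun c f => by
          simp only [Ig_smul_left hcontr hwot h1 h2 f g c, map_mul, RingHom.id_apply,
            Complex.conj_conj, smul_eq_mul] }
      ‖g‖ (fun f => by
        simp only [LinearMap.coe_mk, AddHom.coe_mk, RCLike.norm_conj]
        rw [mul_comm]
        exact Ig_bound hcontr hwot h1 h2 f g)
  let T : Lp H 2 (volume : Measure Ω) → Lp H 2 (volume : Measure Ω) := fun g =>
    (InnerProductSpace.toDual ℂ (Lp H 2 (volume : Measure Ω))).symm (ℓ g)
  have hT : ∀ g f : Lp H 2 (volume : Measure Ω), (inner ℂ f (T g) : ℂ) = Ig β m f g := by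
    intro g f
    have h' : (inner ℂ (T g) f : ℂ) = conj (Ig β m f g) := InnerProductSpace.toDual_symm_apply
    have h'' : conj (inner ℂ (T g) f : ℂ) = (inner ℂ f (T g) : ℂ) := inner_conj_symm f (T g)
    rw [← h'', h', Complex.conj_conj]
  have Tadd : ∀ g g' : Lp H 2 (volume : Measure Ω), T (g + g') = T g + T g' := by
    intro g g'
    apply ext_inner_left ℂ
    intro v
    rw [hT, inner_add_right, hT, hT, Ig_add_right hcontr hwot h1 h2 v g g']
  have Tsmul : ∀ (c : ℂ) (g : Lp H 2 (volume : Measure Ω)), T (c • g) = c • T g := by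
    intro c g
    apply ext_inner_left ℂ
    intro v
    rw [hT, inner_smul_right, hT, Ig_smul_right hcontr hwot h1 h2 v g c]
  have Tbound : ∀ g : Lp H 2 (volume : Measure Ω), ‖T g‖ ≤ 1 * ‖g‖ := by
    intro g
    rw [one_mul]
    have hsq : ‖T g‖ ^ 2 ≤ ‖T g‖ * ‖g‖ := by
      have h := hT g (T g)
      have he : (‖T g‖ : ℝ) ^ 2 = RCLike.re (inner ℂ (T g) (T g) : ℂ) :=
        (inner_self_eq_norm_sq _).symm
      rw [he, h]
      exact (RCLike.re_le_norm _).trans (Ig_bound hcontr hwot h1 h2 _ _)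
    nlinarith [norm_nonneg (T g), norm_nonneg g]
  refine ⟨LinearMap.mkContinuous
    { toFun := T, map_add' := Tadd, map_smul' := Tsmul } 1 Tbound, ?_, ?_⟩
  · intro u v
    exact hT v u
  · exact LinearMap.mkContinuous_norm_le _ zero_le_one _

include hcontr hwot in
lemma cont_part
    (Φ : {μ : ProbabilityMeasure (Ω × S × Ω) //
        Measure.map Prod.fst (μ : Measure (Ω × S × Ω)) = volume ∧
        Measure.map (fun p => p.2.2) (μ : Measure (Ω × S × Ω)) = volume} →
        (Lp H 2 (volume : Measure Ω) →L[ℂ] Lp H 2 (volume : Measure Ω)))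
    (hdef : ∀ μ u v, (inner ℂ u ((Φ μ) v) : ℂ) = Ig β (μ.1 : Measure (Ω × S × Ω)) u v)
    (hnorm : ∀ μ, ‖Φ μ‖ ≤ 1) :
    Continuous fun μ => (inner ℂ f₀ ((Φ μ) f₁) : ℂ) := by
  classical
  have hdense : DenseRange (BoundedContinuousFunction.toLp (E := H) 2 (volume : Measure Ω) ℂ) :=
    BoundedContinuousFunction.toLp_denseRange _ _ ℂ (by norm_num)
  have hex0 : ∀ n : ℕ, ∃ g : BoundedContinuousFunction Ω H,
      dist f₀ (BoundedContinuousFunction.toLp 2 (volume : Measure Ω) ℂ g) < 1 / (n + 1) :=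
    fun n => hdense.exists_dist_lt f₀ (by positivity)
  have hex1 : ∀ n : ℕ, ∃ g : BoundedContinuousFunction Ω H,
      dist f₁ (BoundedContinuousFunction.toLp 2 (volume : Measure Ω) ℂ g) < 1 / (n + 1) :=
    fun n => hdense.exists_dist_lt f₁ (by positivity)
  choose g₀ hg₀ using hex0
  choose g₁ hg₁ using hex1
  set L₀ : ℕ → Lp H 2 (volume : Measure Ω) :=
    fun n => BoundedContinuousFunction.toLp 2 (volume : Measure Ω) ℂ (g₀ n) with hL₀
  set L₁ : ℕ → Lp H 2 (volume : Measure Ω) :=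
    fun n => BoundedContinuousFunction.toLp 2 (volume : Measure Ω) ℂ (g₁ n) with hL₁
  have contApprox : ∀ n : ℕ, Continuous fun μ => (inner ℂ (L₀ n) ((Φ μ) (L₁ n)) : ℂ) := by
    intro n
    have hGc : Continuous fun q : Ω × S × Ω => (inner ℂ (g₀ n q.1) ((β q.2.1) (g₁ n q.2.2)) : ℂ) := by
      exact (contF hcontr hwot).comp
        (((g₀ n).continuous.comp continuous_fst).prodMk
          ((continuous_fst.comp continuous_snd).prodMk
            ((g₁ n).continuous.comp (continuous_snd.comp continuous_snd))))
    set Gn : (Ω × S × Ω) → ℂ := fun q => (inner ℂ (g₀ n q.1) ((β q.2.1) (g₁ n q.2.2)) : ℂ) with hGn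
    have hInt : ∀ μ : {μ : ProbabilityMeasure (Ω × S × Ω) //
        Measure.map Prod.fst (μ : Measure (Ω × S × Ω)) = volume ∧
        Measure.map (fun p => p.2.2) (μ : Measure (Ω × S × Ω)) = volume},
        (inner ℂ (L₀ n) ((Φ μ) (L₁ n)) : ℂ) = ∫ q, Gn q ∂(μ.1 : Measure (Ω × S × Ω)) := by
      intro μ
      rw [hdef]
      apply integral_congr_ae
      have h₀ : ∀ᵐ ω ∂(volume : Measure Ω), (L₀ n : Ω → H) ω = g₀ n ω :=
        (BoundedContinuousFunction.coeFn_toLp 2 (volume : Measure Ω) ℂ (g₀ n)).mono fun ω h => h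
      have h₁ : ∀ᵐ ω ∂(volume : Measure Ω), (L₁ n : Ω → H) ω = g₁ n ω :=
        (BoundedContinuousFunction.coeFn_toLp 2 (volume : Measure Ω) ℂ (g₁ n)).mono fun ω h => h
      filter_upwards [ae_fst μ.2.1 h₀, ae_trd μ.2.2 h₁] with q hq0 hq1
      rw [hq0, hq1]
    have hRe : Continuous fun μ : ProbabilityMeasure (Ω × S × Ω) =>
        ∫ q, (Gn q).re ∂(μ : Measure (Ω × S × Ω)) :=
      MeasureTheory.ProbabilityMeasure.continuous_integral_boundedContinuousFunction
        (BoundedContinuousFunction.mkOfCompact ⟨fun q => (Gn q).re, Complex.continuous_re.comp hGc⟩)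
    have hIm : Continuous fun μ : ProbabilityMeasure (Ω × S × Ω) =>
        ∫ q, (Gn q).im ∂(μ : Measure (Ω × S × Ω)) :=
      MeasureTheory.ProbabilityMeasure.continuous_integral_boundedContinuousFunction
        (BoundedContinuousFunction.mkOfCompact ⟨fun q => (Gn q).im, Complex.continuous_im.comp hGc⟩)
    have key : ∀ μ : ProbabilityMeasure (Ω × S × Ω),
        ∫ q, Gn q ∂(μ : Measure (Ω × S × Ω))
          = ((∫ q, (Gn q).re ∂(μ : Measure (Ω × S × Ω)) : ℝ) : ℂ)
            + ((∫ q, (Gn q).im ∂(μ : Measure (Ω × S × Ω)) : ℝ) : ℂ) * Complex.I := by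
      intro μ
      have hint : Integrable Gn (μ : Measure (Ω × S × Ω)) :=
        (BoundedContinuousFunction.mkOfCompact ⟨Gn, hGc⟩).integrable _
      simp only [← RCLike.re_to_complex, ← RCLike.im_to_complex]
      rw [integral_re hint, integral_im hint, RCLike.re_to_complex, RCLike.im_to_complex,
        Complex.re_add_im]
    have hfun : (fun μ : {μ : ProbabilityMeasure (Ω × S × Ω) //
        Measure.map Prod.fst (μ : Measure (Ω × S × Ω)) = volume ∧
        Measure.map (fun p => p.2.2) (μ : Measure (Ω × S × Ω)) = volume} =>
          (inner ℂ (L₀ n) ((Φ μ) (L₁ n)) : ℂ))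
        = fun μ => ((∫ q, (Gn q).re ∂(μ.1 : Measure (Ω × S × Ω)) : ℝ) : ℂ)
            + ((∫ q, (Gn q).im ∂(μ.1 : Measure (Ω × S × Ω)) : ℝ) : ℂ) * Complex.I := by
      funext μ
      rw [hInt μ, key μ.1]
    rw [hfun]
    exact ((Complex.continuous_ofReal.comp (hRe.comp continuous_subtype_val)).add
      ((Complex.continuous_ofReal.comp (hIm.comp continuous_subtype_val)).mul continuous_const))
  have hcontract : ∀ μ, ∀ v : Lp H 2 (volume : Measure Ω), ‖(Φ μ) v‖ ≤ ‖v‖ := by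
    intro μ v
    exact ((Φ μ).le_opNorm v).trans (mul_le_of_le_one_left (norm_nonneg v) (hnorm μ))
  have hunif : TendstoUniformly (fun n μ => (inner ℂ (L₀ n) ((Φ μ) (L₁ n)) : ℂ))
      (fun μ => (inner ℂ f₀ ((Φ μ) f₁) : ℂ)) Filter.atTop := by
    rw [Metric.tendstoUniformly_iff]
    intro ε hε
    have hc : Filter.Tendsto (fun k : ℕ => (1 / (k + 1) : ℝ) * (‖f₁‖ + ‖f₀‖ + 1))
        Filter.atTop (nhds 0) := by
      have h := tendsto_one_div_add_atTop_nhds_zero_nat (𝕜 := ℝ)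
      simpa using h.mul_const (‖f₁‖ + ‖f₀‖ + 1)
    filter_upwards [hc.eventually (gt_mem_nhds hε), Filter.eventually_ge_atTop 0] with k hk _ μ
    have hsplit : (inner ℂ f₀ ((Φ μ) f₁) : ℂ) - inner ℂ (L₀ k) ((Φ μ) (L₁ k))
        = inner ℂ (f₀ - L₀ k) ((Φ μ) f₁) + inner ℂ (L₀ k) ((Φ μ) (f₁ - L₁ k)) := by
      rw [inner_sub_left, map_sub, inner_sub_right]
      ring
    have hb1 : ‖(inner ℂ (f₀ - L₀ k) ((Φ μ) f₁) : ℂ)‖ ≤ ‖f₀ - L₀ k‖ * ‖f₁‖ :=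
      (norm_inner_le_norm _ _).trans
        (mul_le_mul_of_nonneg_left (hcontract μ f₁) (norm_nonneg _))
    have hb2 : ‖(inner ℂ (L₀ k) ((Φ μ) (f₁ - L₁ k)) : ℂ)‖ ≤ ‖L₀ k‖ * ‖f₁ - L₁ k‖ :=
      (norm_inner_le_norm _ _).trans
        (mul_le_mul_of_nonneg_left (hcontract μ _) (norm_nonneg _))
    have hd0 : ‖f₀ - L₀ k‖ < 1 / (k + 1) := by
      have := hg₀ k
      rwa [dist_eq_norm] at this
    have hd1 : ‖f₁ - L₁ k‖ < 1 / (k + 1) := by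
      have := hg₁ k
      rwa [dist_eq_norm] at this
    have hLb : ‖L₀ k‖ ≤ ‖f₀‖ + 1 := by
      have h3 : ‖L₀ k‖ - ‖f₀‖ ≤ ‖L₀ k - f₀‖ := norm_sub_norm_le _ _
      have h4 : ‖L₀ k - f₀‖ = ‖f₀ - L₀ k‖ := norm_sub_rev _ _
      have h5 : (1 : ℝ) / (k + 1) ≤ 1 := by
        rw [div_le_one (by positivity)]
        linarith [Nat.cast_nonneg (α := ℝ) k]
      linarith
    rw [dist_eq_norm, hsplit]
    have htot : ‖(inner ℂ (f₀ - L₀ k) ((Φ μ) f₁) : ℂ) + inner ℂ (L₀ k) ((Φ μ) (f₁ - L₁ k))‖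
        ≤ ‖f₀ - L₀ k‖ * ‖f₁‖ + ‖L₀ k‖ * ‖f₁ - L₁ k‖ :=
      (norm_add_le _ _).trans (add_le_add hb1 hb2)
    have hpos : (0 : ℝ) < 1 / (k + 1) := by positivity
    calc ‖(inner ℂ (f₀ - L₀ k) ((Φ μ) f₁) : ℂ) + inner ℂ (L₀ k) ((Φ μ) (f₁ - L₁ k))‖
        ≤ ‖f₀ - L₀ k‖ * ‖f₁‖ + ‖L₀ k‖ * ‖f₁ - L₁ k‖ := htot
      _ ≤ (1 / (k + 1)) * ‖f₁‖ + (‖f₀‖ + 1) * (1 / (k + 1)) := by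
          have := norm_nonneg (f₁ - L₁ k)
          have := norm_nonneg (L₀ k)
          have h6 : (0:ℝ) ≤ ‖f₀‖ + 1 := by positivity
          nlinarith [norm_nonneg f₁, norm_nonneg (f₀ - L₀ k)]
      _ = (1 / (k + 1)) * (‖f₁‖ + ‖f₀‖ + 1) := by ring
      _ < ε := hk
  exact hunif.continuous (Filter.Eventually.of_forall contApprox).frequently

end Meas


/-- Given a weak-operator-topology continuous family `β` of contractions of a separable complex
Hilbert space `H` indexed by a compact metrizable space `S`, every probability measure `m` on
`[0,1] × S × [0,1]` with Lebesgue marginals induces a unique contraction `Φ m` of the Bochner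
space `L²([0,1], H)` satisfying `⟪f₀, (Φ m) f₁⟫ = ∫ ⟪f₀(ω₀), β(x) f₁(ω₁)⟫ dm(ω₀, x, ω₁)`;
moreover `m ↦ Φ m` is continuous from weak convergence of measures to the weak operator
topology. -/
theorem stmt_12
    (S : Type) [TopologicalSpace S] [CompactSpace S] [TopologicalSpace.MetrizableSpace S]
    [MeasurableSpace S] [BorelSpace S]
    (H : Type) [NormedAddCommGroup H] [InnerProductSpace ℂ H] [CompleteSpace H]
    [SecondCountableTopology H]
    (β : S → H →L[ℂ] H) (hcontr : ∀ x : S, ‖β x‖ ≤ 1)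
    (hwot : ∀ u v : H, Continuous fun x : S => (inner ℂ u ((β x) v) : ℂ)) :
    ∃ Φ : {m : ProbabilityMeasure (Ω × S × Ω) //
        Measure.map Prod.fst (m : Measure (Ω × S × Ω)) = volume ∧
        Measure.map (fun p => p.2.2) (m : Measure (Ω × S × Ω)) = volume} →
        (Lp H 2 (volume : Measure Ω) →L[ℂ] Lp H 2 (volume : Measure Ω)),
      -- defining relation
      (∀ m, ∀ f₀ f₁ : Lp H 2 (volume : Measure Ω),
        (inner ℂ f₀ ((Φ m) f₁) : ℂ) =
          ∫ p : Ω × S × Ω, (inner ℂ (f₀ p.1) ((β p.2.1) (f₁ p.2.2)) : ℂ)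
            ∂(m.1 : Measure (Ω × S × Ω))) ∧
      -- uniqueness
      (∀ m, ∀ B : Lp H 2 (volume : Measure Ω) →L[ℂ] Lp H 2 (volume : Measure Ω),
        (∀ f₀ f₁ : Lp H 2 (volume : Measure Ω),
          (inner ℂ f₀ (B f₁) : ℂ) =
            ∫ p : Ω × S × Ω, (inner ℂ (f₀ p.1) ((β p.2.1) (f₁ p.2.2)) : ℂ)
              ∂(m.1 : Measure (Ω × S × Ω))) → B = Φ m) ∧
      -- contractivity
      (∀ m, ‖Φ m‖ ≤ 1) ∧
      -- continuity from weak convergence of measures to the weak operator topology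
      (∀ f₀ f₁ : Lp H 2 (volume : Measure Ω),
        Continuous fun m => (inner ℂ f₀ ((Φ m) f₁) : ℂ)) := by
  choose Φ hdef hnorm using fun m : {m : ProbabilityMeasure (Ω × S × Ω) //
      Measure.map Prod.fst (m : Measure (Ω × S × Ω)) = volume ∧
      Measure.map (fun p => p.2.2) (m : Measure (Ω × S × Ω)) = volume} =>
    exists_op hcontr hwot m.2.1 m.2.2
  refine ⟨Φ, ?_, ?_, hnorm, ?_⟩
  · intro m f₀ f₁
    exact hdef m f₀ f₁
  · intro m B hB
    refine ContinuousLinearMap.ext fun f₁ => ?_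
    apply ext_inner_left ℂ
    intro v
    rw [hB v f₁]
    exact (hdef m v f₁).symm
  · intro f₀ f₁
    exact cont_part hcontr hwot f₀ f₁ Φ hdef hnorm
end
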